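/- Let T > 0, let r : [0,T] → ℝ be continuous, and let y, ŷ : [0,T] → ℝ be continuously differentiable functions satisfying y'(t) = y(t)² and ŷ'(t) = ŷ(t)² + r(t) for all t ∈ [0,T], with y(0) = ŷ(0). Set A := ∫₀ᵀ r(s)² ds and M := exp(∫₀ᵀ (4|ŷ(s)| + 1) ds), and assume A > 0. If 16 (1 + T) (8AM)^{1/2} ≤ 1, then the error e := y − ŷ satisfies sup_{t ∈ [0,T]} e(t)² ≤ 2AM. -/

import Mathlib

open MeasureTheory Real Filter Topology

lemma gronwall_aux (b : ℝ) (hb : 0 ≤ b) (f fd c ρ : ℝ → ℝ)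
    (hf : ∀ t ∈ Set.Icc 0 b, HasDerivAt f (fd t) t)
    (hfd_cont : ContinuousOn fd (Set.Icc 0 b))
    (hc : Continuous c) (hc0 : ∀ s, 0 ≤ c s)
    (hρ : Continuous ρ) (hρ0 : ∀ s, 0 ≤ ρ s)
    (hineq : ∀ s ∈ Set.Icc 0 b, fd s ≤ c s * f s + ρ s)
    (hf0 : f 0 = 0) :
    ∀ t ∈ Set.Icc 0 b, f t ≤ (∫ s in (0:ℝ)..b, ρ s) * Real.exp (∫ s in (0:ℝ)..b, c s) := by
  set Φ : ℝ → ℝ := fun t => ∫ s in (0:ℝ)..t, c s with hΦdef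
  have hΦd : ∀ t : ℝ, HasDerivAt Φ (c t) t := by
    intro t
    exact intervalIntegral.integral_hasDerivAt_right
      (hc.intervalIntegrable 0 t) (hc.stronglyMeasurableAtFilter _ _) hc.continuousAt
  have hΦcont : Continuous Φ := by
    apply continuous_iff_continuousAt.2 (fun t => (hΦd t).continuousAt)
  have hΦ0 : Φ 0 = 0 := by simp [hΦdef]
  have hΦnonneg : ∀ t, 0 ≤ t → 0 ≤ Φ t := fun t ht =>
    intervalIntegral.integral_nonneg ht (fun u _ => hc0 u)
  have hΦmono : ∀ t, t ≤ b → Φ t ≤ Φ b := by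
    intro t ht
    have := intervalIntegral.integral_add_adjacent_intervals (μ := volume)
      (hc.intervalIntegrable 0 t) (hc.intervalIntegrable t b)
    have h2 : 0 ≤ ∫ s in t..b, c s := intervalIntegral.integral_nonneg ht (fun u _ => hc0 u)
    simp only [hΦdef]; linarith [this]
  -- g and its derivative
  set g : ℝ → ℝ := fun t => f t * Real.exp (-Φ t) with hgdef
  set gd : ℝ → ℝ := fun t => (fd t - c t * f t) * Real.exp (-Φ t) with hgddef
  have hfcont : ContinuousOn f (Set.Icc 0 b) := fun t ht => ((hf t ht).continuousAt).continuousWithinAt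
  have hgd : ∀ t ∈ Set.Icc 0 b, HasDerivAt g (gd t) t := by
    intro t ht
    have h1 : HasDerivAt (fun u => Real.exp (-Φ u)) (Real.exp (-Φ t) * (-c t)) t :=
      ((hΦd t).neg).exp
    have := (hf t ht).mul h1
    refine this.congr_deriv ?_
    show _ = (fd t - c t * f t) * Real.exp (-Φ t); ring
  have hgdcont : ContinuousOn gd (Set.Icc 0 b) := by
    apply ContinuousOn.mul
    · exact hfd_cont.sub ((hc.continuousOn).mul hfcont)
    · exact ((hΦcont.neg).rexp).continuousOn
  intro t ht
  obtain ⟨ht0, htb⟩ := ht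
  have hIcc : Set.Icc (0:ℝ) t ⊆ Set.Icc 0 b := Set.Icc_subset_Icc le_rfl htb
  have huIcc : Set.uIcc (0:ℝ) t = Set.Icc 0 t := Set.uIcc_of_le ht0
  have hgdint : IntervalIntegrable gd volume 0 t :=
    (hgdcont.mono (by rw [huIcc]; exact hIcc)).intervalIntegrable
  have hftc : ∫ s in (0:ℝ)..t, gd s = g t - g 0 :=
    intervalIntegral.integral_eq_sub_of_hasDerivAt
      (fun x hx => hgd x (hIcc (huIcc ▸ hx))) hgdint
  have hg0 : g 0 = 0 := by simp [hgdef, hf0]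
  have hmono : ∫ s in (0:ℝ)..t, gd s ≤ ∫ s in (0:ℝ)..t, ρ s := by
    apply intervalIntegral.integral_mono_on ht0 hgdint (hρ.intervalIntegrable 0 t)
    intro x hx
    have hx' := hIcc hx
    have hexp1 : Real.exp (-Φ x) ≤ 1 := by
      rw [Real.exp_le_one_iff]
      simpa using hΦnonneg x hx.1
    have hexp0 : (0:ℝ) < Real.exp (-Φ x) := Real.exp_pos _
    have h1 : fd x - c x * f x ≤ ρ x := by linarith [hineq x hx']
    calc (fd x - c x * f x) * Real.exp (-Φ x) ≤ ρ x * Real.exp (-Φ x) := by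
          exact mul_le_mul_of_nonneg_right h1 hexp0.le
      _ ≤ ρ x * 1 := mul_le_mul_of_nonneg_left hexp1 (hρ0 x)
      _ = ρ x := mul_one _
  have hρmono : ∫ s in (0:ℝ)..t, ρ s ≤ ∫ s in (0:ℝ)..b, ρ s := by
    have := intervalIntegral.integral_add_adjacent_intervals (μ := volume)
      (hρ.intervalIntegrable 0 t) (hρ.intervalIntegrable t b)
    have h2 : 0 ≤ ∫ s in t..b, ρ s := intervalIntegral.integral_nonneg htb (fun u _ => hρ0 u)
    linarith [this]
  have hgt : g t ≤ ∫ s in (0:ℝ)..b, ρ s := by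
    have := hftc
    linarith [hmono, hρmono]
  -- convert back
  have hft : f t = g t * Real.exp (Φ t) := by
    simp only [hgdef]
    rw [mul_assoc, ← Real.exp_add]
    simp
  rw [hft]
  have hρint0 : 0 ≤ ∫ s in (0:ℝ)..b, ρ s := intervalIntegral.integral_nonneg hb (fun u _ => hρ0 u)
  calc g t * Real.exp (Φ t) ≤ (∫ s in (0:ℝ)..b, ρ s) * Real.exp (Φ t) :=
        mul_le_mul_of_nonneg_right hgt (Real.exp_pos _).le
    _ ≤ (∫ s in (0:ℝ)..b, ρ s) * Real.exp (Φ b) := by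
        apply mul_le_mul_of_nonneg_left _ hρint0
        exact Real.exp_le_exp.2 (hΦmono t htb)
    _ = _ := rfl

theorem ode_conditional_stability
    (T : ℝ) (hT : 0 < T)
    (r y yhat : ℝ → ℝ)
    (hr : ContinuousOn r (Set.Icc 0 T))
    (hy : ∀ t ∈ Set.Icc (0:ℝ) T, HasDerivAt y ((y t) ^ 2) t)
    (hyhat : ∀ t ∈ Set.Icc (0:ℝ) T, HasDerivAt yhat ((yhat t) ^ 2 + r t) t)
    (hinit : y 0 = yhat 0)
    (A M : ℝ)
    (hA : A = ∫ s in (0:ℝ)..T, (r s) ^ 2)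
    (hApos : 0 < A)
    (hM : M = Real.exp (∫ s in (0:ℝ)..T, (4 * |yhat s| + 1)))
    (hcond : 16 * (1 + T) * Real.sqrt (8 * A * M) ≤ 1) :
    sSup ((fun t => (y t - yhat t) ^ 2) '' Set.Icc 0 T) ≤ 2 * A * M := by
  have hM0 : 0 < M := hM ▸ Real.exp_pos _
  have hAM0 : 0 < A * M := mul_pos hApos hM0
  set L : ℝ := Real.sqrt (2 * A * M) with hLdef
  have hL0 : 0 ≤ L := Real.sqrt_nonneg _
  have hLsq : L ^ 2 = 2 * A * M := Real.sq_sqrt (by positivity)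
  have hsqrt8 : Real.sqrt (8 * A * M) = 2 * L := by
    rw [show (8:ℝ) * A * M = (2*L)^2 by nlinarith]
    exact Real.sqrt_sq (by positivity)
  have hcond' : 32 * (1 + T) * L ≤ 1 := by
    rw [hsqrt8] at hcond; linarith
  have hLT : 2 * L * T ≤ 1/16 := by nlinarith [mul_nonneg (le_of_lt (by linarith : (0:ℝ) < 32)) hL0]
  -- clamp
  set pr : ℝ → ℝ := fun s => max 0 (min s T) with hprdef
  have hprcont : Continuous pr := continuous_const.max (continuous_id.min continuous_const)
  have hprmem : ∀ s, pr s ∈ Set.Icc (0:ℝ) T := fun s =>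
    ⟨le_max_left _ _, max_le (hT.le) (min_le_right _ _)⟩
  have hpreq : ∀ s ∈ Set.Icc (0:ℝ) T, pr s = s := by
    intro s hs
    simp only [hprdef, min_eq_left hs.2, max_eq_right hs.1]
  -- continuity of data
  have hycont : ContinuousOn y (Set.Icc 0 T) :=
    fun t ht => ((hy t ht).continuousAt).continuousWithinAt
  have hyhatcont : ContinuousOn yhat (Set.Icc 0 T) :=
    fun t ht => ((hyhat t ht).continuousAt).continuousWithinAt
  -- extended coefficient functions
  set c : ℝ → ℝ := fun s => 4 * |yhat (pr s)| + 1 + 2 * L with hcdef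
  set ρ : ℝ → ℝ := fun s => (r (pr s)) ^ 2 with hρdef
  have hccont : Continuous c := by
    apply Continuous.add
    apply Continuous.add
    · exact (continuous_const.mul ((hyhatcont.comp_continuous hprcont hprmem).abs))
    · exact continuous_const
    · exact continuous_const
  have hρcont : Continuous ρ := (hr.comp_continuous hprcont hprmem).pow 2
  have hc0 : ∀ s, 0 ≤ c s := by
    intro s
    have := abs_nonneg (yhat (pr s))
    simp only [hcdef]; nlinarith
  have hρ0 : ∀ s, 0 ≤ ρ s := fun s => sq_nonneg _
  -- integral identifications
  have hρint : (∫ s in (0:ℝ)..T, ρ s) = A := by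
    rw [hA]
    apply intervalIntegral.integral_congr
    intro s hs
    rw [Set.uIcc_of_le hT.le] at hs
    simp only [hρdef, hpreq s hs]
  have hcint : (∫ s in (0:ℝ)..T, c s) = (∫ s in (0:ℝ)..T, (4 * |yhat s| + 1)) + 2 * L * T := by
    have h1 : (∫ s in (0:ℝ)..T, c s)
        = (∫ s in (0:ℝ)..T, (4 * |yhat (pr s)| + 1)) + ∫ s in (0:ℝ)..T, (2*L) := by
      have hint1 : IntervalIntegrable (fun s => 4 * |yhat (pr s)| + 1) volume 0 T :=
        ((continuous_const.mul ((hyhatcont.comp_continuous hprcont hprmem).abs)).add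
          continuous_const).intervalIntegrable _ _
      have hint2 : IntervalIntegrable (fun _ : ℝ => 2*L) volume 0 T :=
        continuous_const.intervalIntegrable _ _
      rw [← intervalIntegral.integral_add hint1 hint2]
    rw [h1]
    have h2 : (∫ s in (0:ℝ)..T, (4 * |yhat (pr s)| + 1)) = ∫ s in (0:ℝ)..T, (4 * |yhat s| + 1) := by
      apply intervalIntegral.integral_congr
      intro s hs
      rw [Set.uIcc_of_le hT.le] at hs
      simp only [hpreq s hs]
    have h3 : (∫ s in (0:ℝ)..T, (2*L : ℝ)) = 2 * L * T := by
      rw [intervalIntegral.integral_const]; simp; ring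
    rw [h2, h3]
  have hexpc : Real.exp (∫ s in (0:ℝ)..T, c s) = M * Real.exp (2*L*T) := by
    rw [hcint, Real.exp_add, hM]
  -- the error function
  set f : ℝ → ℝ := fun t => (y t - yhat t) ^ 2 with hfdef
  set fd : ℝ → ℝ := fun t => 2 * (y t - yhat t) * ((y t) ^ 2 - ((yhat t) ^ 2 + r t)) with hfddef
  have hfderiv : ∀ t ∈ Set.Icc (0:ℝ) T, HasDerivAt f (fd t) t := by
    intro t ht
    have he : HasDerivAt (fun u => y u - yhat u) ((y t) ^ 2 - ((yhat t) ^ 2 + r t)) t :=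
      (hy t ht).sub (hyhat t ht)
    have := he.pow 2
    refine this.congr_deriv ?_
    show _ = 2 * (y t - yhat t) * ((y t) ^ 2 - ((yhat t) ^ 2 + r t)); push_cast; ring
  have hfcont : ContinuousOn f (Set.Icc 0 T) := ((hycont.sub hyhatcont).pow 2)
  have hfdcont : ContinuousOn fd (Set.Icc 0 T) := by
    apply ContinuousOn.mul
    · exact (continuous_const.continuousOn.mul (hycont.sub hyhatcont))
    · exact (hycont.pow 2).sub ((hyhatcont.pow 2).add hr)
  have hf0 : f 0 = 0 := by simp [hfdef, hinit]
  set D : ℝ := 2 * A * M with hDdef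
  have hD0 : 0 < D := by positivity
  set K : ℝ := A * (M * Real.exp (2*L*T)) with hKdef
  have hKD : K < D := by
    have h1 : Real.exp (2*L*T) < 2 := by
      have h2 : (2:ℝ)*L*T < Real.log 2 := by
        have := Real.log_two_gt_d9; linarith
      calc Real.exp (2*L*T) < Real.exp (Real.log 2) := Real.exp_lt_exp.2 h2
        _ = 2 := Real.exp_log two_pos
    simp only [hKdef, hDdef]
    nlinarith
  -- Gronwall step
  have hgronwall : ∀ b ∈ Set.Icc (0:ℝ) T, (∀ s ∈ Set.Icc (0:ℝ) b, f s ≤ D) →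
      ∀ t ∈ Set.Icc (0:ℝ) b, f t ≤ K := by
    intro b hb hbound t ht
    have hsub : Set.Icc (0:ℝ) b ⊆ Set.Icc 0 T := Set.Icc_subset_Icc le_rfl hb.2
    have hineq : ∀ s ∈ Set.Icc (0:ℝ) b, fd s ≤ c s * f s + ρ s := by
      intro s hs
      have hsT := hsub hs
      have habs : |y s - yhat s| ≤ L := by
        rw [← Real.sqrt_sq_eq_abs]
        calc Real.sqrt ((y s - yhat s)^2) ≤ Real.sqrt (L^2) := by
              apply Real.sqrt_le_sqrt
              rw [hLsq]; exact hbound s hs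
          _ = L := Real.sqrt_sq hL0
      obtain ⟨habs1, habs2⟩ := abs_le.1 habs
      have h1 : 0 ≤ (L - (y s - yhat s)) * (y s - yhat s)^2 :=
        mul_nonneg (by linarith) (sq_nonneg _)
      have h2 : 0 ≤ (|yhat s| - yhat s) * (y s - yhat s)^2 :=
        mul_nonneg (by linarith [le_abs_self (yhat s)]) (sq_nonneg _)
      have h3 : 0 ≤ ((y s - yhat s) + r s)^2 := sq_nonneg _
      simp only [hfddef, hcdef, hρdef, hfdef, hpreq s hsT]
      nlinarith
    have := gronwall_aux b hb.1 f fd c ρ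
      (fun t ht => hfderiv t (hsub ht)) (hfdcont.mono hsub)
      hccont hc0 hρcont hρ0 hineq hf0 t ht
    refine le_trans this ?_
    -- ∫₀ᵇ ρ ≤ A and ∫₀ᵇ c ≤ ∫₀ᵀ c
    have hρb : (∫ s in (0:ℝ)..b, ρ s) ≤ A := by
      rw [← hρint]
      have hadd := intervalIntegral.integral_add_adjacent_intervals (μ := volume)
        (hρcont.intervalIntegrable 0 b) (hρcont.intervalIntegrable b T)
      have h2 : 0 ≤ ∫ s in b..T, ρ s := intervalIntegral.integral_nonneg hb.2 (fun u _ => hρ0 u)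
      linarith
    have hcb : (∫ s in (0:ℝ)..b, c s) ≤ ∫ s in (0:ℝ)..T, c s := by
      have hadd := intervalIntegral.integral_add_adjacent_intervals (μ := volume)
        (hccont.intervalIntegrable 0 b) (hccont.intervalIntegrable b T)
      have h2 : 0 ≤ ∫ s in b..T, c s := intervalIntegral.integral_nonneg hb.2 (fun u _ => hc0 u)
      linarith
    have hρbnn : 0 ≤ ∫ s in (0:ℝ)..b, ρ s :=
      intervalIntegral.integral_nonneg hb.1 (fun u _ => hρ0 u)
    calc (∫ s in (0:ℝ)..b, ρ s) * Real.exp (∫ s in (0:ℝ)..b, c s)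
        ≤ A * Real.exp (∫ s in (0:ℝ)..b, c s) :=
          mul_le_mul_of_nonneg_right hρb (Real.exp_pos _).le
      _ ≤ A * Real.exp (∫ s in (0:ℝ)..T, c s) := by
          apply mul_le_mul_of_nonneg_left (Real.exp_le_exp.2 hcb) hApos.le
      _ = K := by rw [hexpc, hKdef]
  -- bootstrap
  have hmain : ∀ t ∈ Set.Icc (0:ℝ) T, f t ≤ D := by
    set S : Set ℝ := {t | t ∈ Set.Icc (0:ℝ) T ∧ ∀ s ∈ Set.Icc (0:ℝ) t, f s ≤ D} with hSdef
    have h0S : (0:ℝ) ∈ S := by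
      constructor
      · exact ⟨le_rfl, hT.le⟩
      · intro s hs
        have : s = 0 := le_antisymm hs.2 hs.1
        rw [this, hf0]; exact hD0.le
    have hSne : S.Nonempty := ⟨0, h0S⟩
    have hSbdd : BddAbove S := ⟨T, fun t ht => ht.1.2⟩
    set b : ℝ := sSup S with hbdef
    have hb0 : 0 ≤ b := le_csSup hSbdd h0S
    have hbT : b ≤ T := csSup_le hSne (fun t ht => ht.1.2)
    have hbmem : b ∈ Set.Icc (0:ℝ) T := ⟨hb0, hbT⟩
    have hlt : ∀ s, 0 ≤ s → s < b → f s ≤ D := by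
      intro s hs0 hsb
      obtain ⟨t, htS, hst⟩ := exists_lt_of_lt_csSup hSne hsb
      exact htS.2 s ⟨hs0, hst.le⟩
    have hfbD : f b ≤ D := by
      rcases eq_or_lt_of_le hb0 with h | h
      · rw [← h, hf0]; exact hD0.le
      · have hcw : ContinuousWithinAt f (Set.Ico 0 b) b :=
          (hfcont.continuousWithinAt hbmem).mono
            (fun x hx => ⟨hx.1, hx.2.le.trans hbT⟩)
        have hclos : b ∈ closure (Set.Ico (0:ℝ) b) := by
          rw [closure_Ico (ne_of_lt h)]
          exact ⟨hb0, le_rfl⟩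
        have : (𝓝[Set.Ico (0:ℝ) b] b).NeBot := mem_closure_iff_nhdsWithin_neBot.1 hclos
        exact le_of_tendsto hcw
          (Filter.eventually_of_mem self_mem_nhdsWithin (fun s hs => hlt s hs.1 hs.2))
    have hbS : ∀ s ∈ Set.Icc (0:ℝ) b, f s ≤ D := by
      intro s hs
      rcases eq_or_lt_of_le hs.2 with h | h
      · rw [h]; exact hfbD
      · exact hlt s hs.1 h
    rcases eq_or_lt_of_le hbT with hbeq | hblt
    · intro t ht
      exact hbS t ⟨ht.1, hbeq ▸ ht.2⟩
    · exfalso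
      -- f b ≤ K < D, get eventually then contradict sSup
      have hfbK : f b ≤ K := hgronwall b hbmem hbS b ⟨hb0, le_rfl⟩
      have hfbD' : f b < D := lt_of_le_of_lt hfbK hKD
      have hcw : ContinuousWithinAt f (Set.Icc 0 T) b := hfcont.continuousWithinAt hbmem
      have hev : f ⁻¹' (Set.Iio D) ∈ 𝓝[Set.Icc (0:ℝ) T] b := hcw (Iio_mem_nhds hfbD')
      rw [Metric.mem_nhdsWithin_iff] at hev
      obtain ⟨ε, hε, hball⟩ := hev
      set t : ℝ := min (b + ε/2) T with htdef
      have hbt : b < t := lt_min (by linarith) hblt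
      have htT : t ≤ T := min_le_right _ _
      have htS : t ∈ S := by
        constructor
        · exact ⟨by linarith, htT⟩
        · intro s hs
          rcases le_or_gt s b with h | h
          · exact hbS s ⟨hs.1, h⟩
          · have hsball : s ∈ Metric.ball b ε := by
              rw [Metric.mem_ball, Real.dist_eq, abs_of_nonneg (by linarith : (0:ℝ) ≤ s - b)]
              have : s ≤ b + ε/2 := hs.2.trans (min_le_left _ _)
              linarith
            have : s ∈ f ⁻¹' (Set.Iio D) := hball ⟨hsball, ⟨hs.1, hs.2.trans htT⟩⟩
            exact (Set.mem_Iio.1 this).le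
      have : t ≤ b := le_csSup hSbdd htS
      linarith
  -- conclude
  apply csSup_le
  · exact ⟨f 0, ⟨0, ⟨le_rfl, hT.le⟩, rfl⟩⟩
  · rintro x ⟨t, ht, rfl⟩
    exact hmain t ht
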